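/- (Step 1 of the parabolic maximum principle.) Let 𝒟 ⊂ ℤ^d × ℤ be finite with 𝒟 ∪ 𝒟^p ⊆ B_R × [0,T], and assume that for every (x,n) ∈ 𝒟 one has (x,n+1) ∈ 𝒟 ∪ 𝒟^p. Let u : 𝒟 ∪ 𝒟^p → ℝ with M := max_𝒟 u > 0 and max_{𝒟^p} u ≤ 0. Then Λ ⊆ χ(Γ⁺) := ⋃_{(x,n)∈Γ⁺} χ(x,n). -/
import Mathlib


namespace ParabolicMaxStep1

/-- Points of the lattice `ℤ^d`. -/
abbrev Zd (d : ℕ) := Fin d → ℤ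

/-- `I_u(x,n)`: slopes `p ∈ ℝ^d` with `u(x,n) − u(y,m) ≥ p·(x−y)` for all
`(y,m) ∈ 𝒟 ∪ 𝒟^p` with `m > n`. -/
def Iset (d : ℕ) (D Dp : Finset (Zd d × ℤ)) (u : Zd d × ℤ → ℝ) (p : Zd d × ℤ) :
    Set (Fin d → ℝ) :=
  {q | ∀ r ∈ D ∪ Dp, p.2 < r.2 →
    ∑ i, q i * ((p.1 i - r.1 i : ℤ) : ℝ) ≤ u p - u r}

/-- The upper contact set `Γ⁺`. -/
def GammaPlus (d : ℕ) (D Dp : Finset (Zd d × ℤ)) (u : Zd d × ℤ → ℝ) (R : ℝ) :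
    Set (Zd d × ℤ) :=
  {p | p ∈ D ∧ ∃ q ∈ Iset d D Dp u p,
    R * Real.sqrt (∑ i, q i ^ 2) < u p - ∑ i, q i * (p.1 i : ℝ)}

/-- `χ(x,n) = {(p, q − x·p) : p ∈ I_u(x,n), q ∈ [u(x,n+1), u(x,n)]} ⊂ ℝ^{d+1}`. -/
def chi (d : ℕ) (D Dp : Finset (Zd d × ℤ)) (u : Zd d × ℤ → ℝ) (p : Zd d × ℤ) :
    Set ((Fin d → ℝ) × ℝ) :=
  {w | ∃ q ∈ Iset d D Dp u p, ∃ s ∈ Set.Icc (u (p.1, p.2 + 1)) (u p),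
    w = (q, s - ∑ i, (p.1 i : ℝ) * q i)}

/-- `Λ = {(ξ,h) : R‖ξ‖₂ < h < M/2}`. -/
def Lambda (d : ℕ) (R M : ℝ) : Set ((Fin d → ℝ) × ℝ) :=
  {w | R * Real.sqrt (∑ i, w.1 i ^ 2) < w.2 ∧ w.2 < M / 2}

/-- **Step 1 of the parabolic maximum principle.**
If `𝒟 ∪ 𝒟^p ⊆ B_R × [0,T]`, `(x,n) ∈ 𝒟 → (x,n+1) ∈ 𝒟 ∪ 𝒟^p`, `M = max_𝒟 u > 0`
and `max_{𝒟^p} u ≤ 0`, then `Λ ⊆ ⋃_{(x,n) ∈ Γ⁺} χ(x,n)`. -/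
theorem step1_cone_subset_chi {d : ℕ} (hd : 1 ≤ d) (R T : ℝ) (hR : 0 < R) (hT : 0 < T)
    (D Dp : Finset (Zd d × ℤ)) (hdisj : Disjoint D Dp)
    (hsub : ∀ q ∈ D ∪ Dp,
      Real.sqrt (∑ i, (q.1 i : ℝ) ^ 2) ≤ R ∧ (0 : ℝ) ≤ (q.2 : ℝ) ∧ (q.2 : ℝ) ≤ T)
    (hclose : ∀ p ∈ D, (p.1, p.2 + 1) ∈ D ∪ Dp)
    (u : Zd d × ℤ → ℝ) (M : ℝ) (hM : 0 < M)
    (hMub : ∀ p ∈ D, u p ≤ M) (hMatt : ∃ p ∈ D, u p = M)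
    (hbd : ∀ p ∈ Dp, u p ≤ 0) :
    Lambda d R M ⊆ ⋃ p ∈ GammaPlus d D Dp u R, chi d D Dp u p := by
  rintro ⟨ξ, h⟩ ⟨hl, hr⟩
  simp only at hl hr
  set Nξ := Real.sqrt (∑ i, ξ i ^ 2) with hNdef
  have hN0 : 0 ≤ Nξ := Real.sqrt_nonneg _
  have hRN : 0 ≤ R * Nξ := mul_nonneg hR.le hN0
  -- Cauchy–Schwarz bound
  have hCS : ∀ r ∈ D ∪ Dp, |∑ i, ξ i * (r.1 i : ℝ)| ≤ R * Nξ := by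
    intro r hrm
    have h1 : (∑ i, ξ i * (r.1 i : ℝ)) ^ 2 ≤
        (∑ i, ξ i ^ 2) * (∑ i, (r.1 i : ℝ) ^ 2) :=
      Finset.sum_mul_sq_le_sq_mul_sq _ _ _
    have h2 : |∑ i, ξ i * (r.1 i : ℝ)| ≤ Nξ * Real.sqrt (∑ i, (r.1 i : ℝ) ^ 2) := by
      rw [← Real.sqrt_sq_eq_abs, ← Real.sqrt_mul (by positivity)]
      exact Real.sqrt_le_sqrt h1
    have h3 := (hsub r hrm).1
    calc |∑ i, ξ i * (r.1 i : ℝ)| ≤ Nξ * Real.sqrt (∑ i, (r.1 i : ℝ) ^ 2) := h2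
      _ ≤ Nξ * R := by exact mul_le_mul_of_nonneg_left h3 hN0
      _ = R * Nξ := mul_comm _ _
  -- the set of contact candidates
  set A : Finset (Zd d × ℤ) :=
    (D ∪ Dp).filter (fun r => h + ∑ i, ξ i * (r.1 i : ℝ) < u r) with hAdef
  obtain ⟨p0, hp0D, hp0M⟩ := hMatt
  have hp0A : p0 ∈ A := by
    refine Finset.mem_filter.mpr ⟨Finset.mem_union_left _ hp0D, ?_⟩
    have := (hCS p0 (Finset.mem_union_left _ hp0D))
    have hle : ∑ i, ξ i * (p0.1 i : ℝ) ≤ R * Nξ := (abs_le.mp this).2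
    have : h + ∑ i, ξ i * (p0.1 i : ℝ) < M / 2 + M / 2 := by
      apply add_lt_add_of_lt_of_le hr (hle.trans (le_of_lt (hl.trans hr)))
    rw [hp0M]; linarith
  obtain ⟨x, hxA, hxmax⟩ := Finset.exists_max_image A (fun r => r.2) ⟨p0, hp0A⟩
  obtain ⟨hxm, hxu⟩ := Finset.mem_filter.mp hxA
  -- points of A are not in Dp
  have hAD : ∀ r ∈ A, r ∈ D := by
    intro r hrA
    obtain ⟨hrm, hru⟩ := Finset.mem_filter.mp hrA
    rcases Finset.mem_union.mp hrm with hrD | hrDp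
    · exact hrD
    · exfalso
      have h1 : -(R * Nξ) ≤ ∑ i, ξ i * (r.1 i : ℝ) := (abs_le.mp (hCS r hrm)).1
      have h2 := hbd r hrDp
      linarith
  have hxD : x ∈ D := hAD x hxA
  -- ξ ∈ Iset at x
  have hxI : ξ ∈ Iset d D Dp u x := by
    intro r hrm hlt
    have hrA : r ∉ A := fun hrA => absurd (hxmax r hrA) (by omega)
    have hru : u r ≤ h + ∑ i, ξ i * (r.1 i : ℝ) := by
      by_contra hc
      exact hrA (Finset.mem_filter.mpr ⟨hrm, lt_of_not_ge hc⟩)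
    have : ∑ i, ξ i * ((x.1 i - r.1 i : ℤ) : ℝ)
        = (∑ i, ξ i * (x.1 i : ℝ)) - ∑ i, ξ i * (r.1 i : ℝ) := by
      rw [← Finset.sum_sub_distrib]
      congr 1; ext i; push_cast; ring
    rw [this]; linarith
  -- (x, n+1) gives the lower bound for s
  have hx1 : u (x.1, x.2 + 1) ≤ h + ∑ i, ξ i * (x.1 i : ℝ) := by
    have hmem := hclose x hxD
    have hnA : (x.1, x.2 + 1) ∉ A := fun hA => absurd (hxmax _ hA) (by simp)
    by_contra hc
    exact hnA (Finset.mem_filter.mpr ⟨hmem, by simpa using lt_of_not_ge hc⟩)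
  refine Set.mem_iUnion₂.mpr ⟨x, ⟨hxD, ξ, hxI, ?_⟩, ?_⟩
  · have : h < u x - ∑ i, ξ i * (x.1 i : ℝ) := by linarith
    exact hl.trans this
  · refine ⟨ξ, hxI, h + ∑ i, ξ i * (x.1 i : ℝ), ⟨hx1, hxu.le⟩, ?_⟩
    have : ∑ i, (x.1 i : ℝ) * ξ i = ∑ i, ξ i * (x.1 i : ℝ) := by
      apply Finset.sum_congr rfl; intro i _; ring
    rw [Prod.mk.injEq]
    exact ⟨rfl, by rw [this]; ring⟩


end ParabolicMaxStep1
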